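/- (Lemma 1) Let f : ℝ → ℝ be defined by f(t) := max( t·(1 − t/2), 1 − 1/t ). Let n and r be positive natural numbers, let X be a nonempty finite set of nonzero vectors in 𝔽₂ⁿ with |X| = m, and set x := m · 2^(−r). If H is a matrix chosen uniformly at random from all r × n matrices over 𝔽₂, then P(X ∩ ker H ≠ ∅) ≥ f(x). -/
import Mathlib

open Finset Matrix

lemma card_fiber_zero_mul' {M N : Type*} [AddCommGroup M] [AddCommGroup N] [Fintype M]
    [Fintype N] [DecidableEq M] [DecidableEq N] (f : M →+ N) (hf : Function.Surjective f) :
    (Finset.univ.filter fun x => f x = 0).card * Fintype.card N = Fintype.card M := by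
  have key : ∀ y : N, (Finset.univ.filter fun x => f x = y).card
      = (Finset.univ.filter fun x => f x = 0).card := by
    intro y
    obtain ⟨x₀, hx₀⟩ := hf y
    apply Finset.card_bij' (fun x _ => x - x₀) (fun x _ => x + x₀)
    · intro a ha
      simp only [mem_filter, mem_univ, true_and] at ha ⊢
      simp [ha, hx₀]
    · intro a ha
      simp only [mem_filter, mem_univ, true_and] at ha ⊢
      simp [ha, hx₀]
    · intro a _; simp
    · intro a _; simp
  have h2 := Finset.card_eq_sum_card_fiberwise
    (s := (Finset.univ : Finset M)) (t := (Finset.univ : Finset N)) (f := f)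
    (fun x _ => mem_univ _)
  simp only [key, Finset.sum_const, Finset.card_univ, smul_eq_mul] at h2
  rw [mul_comm, h2]

lemma zmod2_cases' : ∀ a : ZMod 2, a = 0 ∨ a = 1 := by decide

lemma zmod2_ne_zero' {a : ZMod 2} (h : a ≠ 0) : a = 1 :=
  (zmod2_cases' a).resolve_left h

lemma dot_two_support' {n : ℕ} (i j : Fin n) (hij : i ≠ j) (h u : Fin n → ZMod 2)
    (hh : ∀ k, k ≠ i → k ≠ j → h k = 0) :
    h ⬝ᵥ u = h i * u i + h j * u j := by
  rw [dotProduct]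
  rw [← Finset.sum_subset (Finset.subset_univ {i, j})]
  · rw [Finset.sum_pair hij]
  · intro k _ hk
    simp only [Finset.mem_insert, Finset.mem_singleton, not_or] at hk
    rw [hh k hk.1 hk.2, zero_mul]

lemma row_half' {n : ℕ} (v w : Fin n → ZMod 2) (hw : w ≠ 0) (i : Fin n)
    (hvi : v i = 1) (hwi : w i = 0) (s t : ZMod 2) :
    ∃ h : Fin n → ZMod 2, h ⬝ᵥ v = s ∧ h ⬝ᵥ w = t := by
  obtain ⟨j, hj⟩ : ∃ j, w j ≠ 0 := by
    by_contra hc; push_neg at hc; exact hw (funext hc)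
  have hwj : w j = 1 := zmod2_ne_zero' hj
  have hij : i ≠ j := fun h => hj (h ▸ hwi)
  refine ⟨fun k => if k = i then s - t * v j else if k = j then t else 0, ?_, ?_⟩
  · rw [dot_two_support' i j hij _ v (fun k h1 h2 => by simp [h1, h2])]
    simp [hij, Ne.symm hij, hvi]
  · rw [dot_two_support' i j hij _ w (fun k h1 h2 => by simp [h1, h2])]
    simp [hij, Ne.symm hij, hwi, hwj]

lemma row_pair_surj' {n : ℕ} (v w : Fin n → ZMod 2) (hv : v ≠ 0) (hw : w ≠ 0)
    (hvw : v ≠ w) (s t : ZMod 2) :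
    ∃ h : Fin n → ZMod 2, h ⬝ᵥ v = s ∧ h ⬝ᵥ w = t := by
  obtain ⟨i, hi⟩ : ∃ i, v i ≠ w i := by
    by_contra hc; push_neg at hc; exact hvw (funext hc)
  rcases zmod2_cases' (v i) with h0 | h1
  · have hwi : w i = 1 := zmod2_ne_zero' (fun h => hi (h0.trans h.symm))
    obtain ⟨h, h1, h2⟩ := row_half' w v hv i hwi h0 t s
    exact ⟨h, h2, h1⟩
  · have hwi : w i = 0 := by
      rcases zmod2_cases' (w i) with h | h
      · exact h
      · exact absurd (h1.trans h.symm) hi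
    exact row_half' v w hw i h1 hwi s t

lemma cnt_eq' {n r : ℕ} (v : Fin n → ZMod 2) (hv : v ≠ 0) :
    (Finset.univ.filter fun H : Matrix (Fin r) (Fin n) (ZMod 2) => H.mulVec v = 0).card * 2 ^ r
      = Fintype.card (Matrix (Fin r) (Fin n) (ZMod 2)) := by
  classical
  have hcard : Fintype.card (Fin r → ZMod 2) = 2 ^ r := by
    simp [Fintype.card_fun]
  let f : Matrix (Fin r) (Fin n) (ZMod 2) →+ (Fin r → ZMod 2) :=
    { toFun := fun H => H.mulVec v
      map_zero' := by simp [Matrix.zero_mulVec]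
      map_add' := fun A B => by simp [Matrix.add_mulVec] }
  have hf : Function.Surjective f := by
    intro c
    obtain ⟨j, hj⟩ : ∃ j, v j ≠ 0 := by
      by_contra hc; push_neg at hc; exact hv (funext hc)
    have hj1 : v j = 1 := zmod2_ne_zero' hj
    refine ⟨Matrix.of fun i k => if k = j then c i else 0, ?_⟩
    funext i
    show (Matrix.of fun i k => if k = j then c i else 0).mulVec v i = c i
    simp [Matrix.mulVec, dotProduct, ite_mul, hj1]
  have key := card_fiber_zero_mul' f hf
  rw [hcard] at key
  exact key

lemma cnt2_eq' {n r : ℕ} (v w : Fin n → ZMod 2) (hv : v ≠ 0) (hw : w ≠ 0) (hvw : v ≠ w) :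
    (Finset.univ.filter fun H : Matrix (Fin r) (Fin n) (ZMod 2) =>
        H.mulVec v = 0 ∧ H.mulVec w = 0).card * (2 ^ r * 2 ^ r)
      = Fintype.card (Matrix (Fin r) (Fin n) (ZMod 2)) := by
  classical
  have hcard : Fintype.card ((Fin r → ZMod 2) × (Fin r → ZMod 2)) = 2 ^ r * 2 ^ r := by
    simp [Fintype.card_fun]
  let f : Matrix (Fin r) (Fin n) (ZMod 2) →+ (Fin r → ZMod 2) × (Fin r → ZMod 2) :=
    { toFun := fun H => (H.mulVec v, H.mulVec w)
      map_zero' := by simp [Matrix.zero_mulVec]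
      map_add' := fun A B => by simp [Matrix.add_mulVec] }
  have hf : Function.Surjective f := by
    rintro ⟨a, b⟩
    choose h h1 h2 using fun i => row_pair_surj' v w hv hw hvw (a i) (b i)
    refine ⟨Matrix.of h, ?_⟩
    have e1 : (Matrix.of h).mulVec v = a := funext fun i => h1 i
    have e2 : (Matrix.of h).mulVec w = b := funext fun i => h2 i
    show ((Matrix.of h).mulVec v, (Matrix.of h).mulVec w) = (a, b)
    rw [e1, e2]
  have key := card_fiber_zero_mul' f hf
  rw [hcard] at key
  rw [← key]
  have heq : (Finset.univ.filter fun H : Matrix (Fin r) (Fin n) (ZMod 2) =>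
      H.mulVec v = 0 ∧ H.mulVec w = 0) = Finset.univ.filter fun x => f x = 0 :=
    Finset.filter_congr fun H _ => by
      show (H.mulVec v = 0 ∧ H.mulVec w = 0) ↔ (H.mulVec v, H.mulVec w) = 0
      rw [Prod.mk_eq_zero]
  rw [heq]

set_option maxHeartbeats 1000000

/-- Lemma 1: Let `f(t) := max(t·(1 - t/2), 1 - 1/t)`. For a nonempty
finite set `X` of `m` nonzero vectors of `𝔽₂ⁿ`, setting `x := m · 2^(-r)`, the
probability that `X` meets the random code `ker H` (for `H` a uniformly random `r × n`
matrix over `𝔽₂`) is at least `f(x)`. -/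
theorem prob_meets_random_code_lower_bound (n r m : ℕ) (hn : 0 < n) (hr : 0 < r)
    (f : ℝ → ℝ) (hf : ∀ t, f t = max (t * (1 - t / 2)) (1 - 1 / t))
    (X : Finset (Fin n → ZMod 2)) (hXne : X.Nonempty) (hX : ∀ v ∈ X, v ≠ 0)
    (hm : X.card = m)
    (x : ℝ) (hx : x = (m : ℝ) * (2 : ℝ) ^ (-(r : ℤ))) :
    ((Finset.univ.filter
        (fun H : Matrix (Fin r) (Fin n) (ZMod 2) => ∃ v ∈ X, H.mulVec v = 0)).card : ℝ) /
      (Fintype.card (Matrix (Fin r) (Fin n) (ZMod 2)) : ℝ)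
      ≥ f x := by
  classical
  set T : ℝ := (Fintype.card (Matrix (Fin r) (Fin n) (ZMod 2)) : ℝ) with hTdef
  set p : ℝ := (2 : ℝ) ^ (-(r : ℤ)) with hpdef
  have hp : p = ((2 : ℝ) ^ r)⁻¹ := by rw [hpdef, _root_.zpow_neg, zpow_natCast]
  have hQ0 : (0 : ℝ) < 2 ^ r := by positivity
  have hp0 : 0 < p := by rw [hp]; positivity
  have hT0 : 0 < T := by
    rw [hTdef]; exact_mod_cast Fintype.card_pos
  have hm1 : 1 ≤ m := by rw [← hm]; exact Finset.card_pos.mpr hXne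
  have hm1' : (1 : ℝ) ≤ (m : ℝ) := by exact_mod_cast hm1
  have hx0 : 0 < x := by rw [hx]; exact mul_pos (by linarith) hp0
  -- per-vector count
  have hcnt : ∀ v ∈ X,
      ((Finset.univ.filter fun H : Matrix (Fin r) (Fin n) (ZMod 2) =>
        H.mulVec v = 0).card : ℝ) = T * p := by
    intro v hv
    have h2 := cnt_eq' (r := r) v (hX v hv)
    have h3 : ((Finset.univ.filter fun H : Matrix (Fin r) (Fin n) (ZMod 2) =>
        H.mulVec v = 0).card : ℝ) * (2 : ℝ) ^ r = T := by exact_mod_cast congrArg Nat.cast h2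
    rw [hp, ← h3]; field_simp
  -- per-pair count
  have hcnt2 : ∀ v ∈ X, ∀ w ∈ X, v ≠ w →
      ((Finset.univ.filter fun H : Matrix (Fin r) (Fin n) (ZMod 2) =>
        H.mulVec v = 0 ∧ H.mulVec w = 0).card : ℝ) = T * p ^ 2 := by
    intro v hv w hw hvw
    have h2 := cnt2_eq' (r := r) v w (hX v hv) (hX w hw) hvw
    have h3 : ((Finset.univ.filter fun H : Matrix (Fin r) (Fin n) (ZMod 2) =>
        H.mulVec v = 0 ∧ H.mulVec w = 0).card : ℝ) * ((2:ℝ) ^ r * (2:ℝ) ^ r) = T := by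
      exact_mod_cast congrArg Nat.cast h2
    have h4 : ((2:ℝ)^r) ≠ 0 := ne_of_gt hQ0
    rw [hp, ← h3, sq]
    field_simp
  set Nf : Matrix (Fin r) (Fin n) (ZMod 2) → ℕ :=
    fun H => (X.filter fun v => H.mulVec v = 0).card with hNf
  -- first moment
  have hS1 : ∑ H : Matrix (Fin r) (Fin n) (ZMod 2), (Nf H : ℝ) = (m : ℝ) * (T * p) := by
    calc ∑ H : Matrix (Fin r) (Fin n) (ZMod 2), (Nf H : ℝ)
        = ∑ H : Matrix (Fin r) (Fin n) (ZMod 2), ∑ v ∈ X,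
            (if H.mulVec v = 0 then (1:ℝ) else 0) := by
          refine Finset.sum_congr rfl fun H _ => ?_
          rw [Finset.sum_boole]
      _ = ∑ v ∈ X, ∑ H : Matrix (Fin r) (Fin n) (ZMod 2),
            (if H.mulVec v = 0 then (1:ℝ) else 0) := Finset.sum_comm
      _ = ∑ v ∈ X, (T * p) := by
          refine Finset.sum_congr rfl fun v hv => ?_
          rw [Finset.sum_boole]
          exact hcnt v hv
      _ = (m : ℝ) * (T * p) := by
          rw [Finset.sum_const, hm, nsmul_eq_mul]
  -- second moment
  have hS2 : ∑ H : Matrix (Fin r) (Fin n) (ZMod 2), (Nf H : ℝ) ^ 2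
      = (m : ℝ) * (T * p) + (m : ℝ) * ((m : ℝ) - 1) * (T * p ^ 2) := by
    have step1 : ∀ H : Matrix (Fin r) (Fin n) (ZMod 2), (Nf H : ℝ) ^ 2
        = ∑ v ∈ X, ∑ w ∈ X, (if H.mulVec v = 0 ∧ H.mulVec w = 0 then (1:ℝ) else 0) := by
      intro H
      rw [sq, ← Finset.sum_boole (p := fun v => H.mulVec v = 0) (s := X),
        Finset.sum_mul_sum]
      refine Finset.sum_congr rfl fun v _ => Finset.sum_congr rfl fun w _ => ?_
      simp only [ite_mul, one_mul, zero_mul, ← ite_and]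
    calc ∑ H : Matrix (Fin r) (Fin n) (ZMod 2), (Nf H : ℝ) ^ 2
        = ∑ H : Matrix (Fin r) (Fin n) (ZMod 2), ∑ v ∈ X, ∑ w ∈ X,
            (if H.mulVec v = 0 ∧ H.mulVec w = 0 then (1:ℝ) else 0) :=
          Finset.sum_congr rfl fun H _ => step1 H
      _ = ∑ v ∈ X, ∑ w ∈ X, ∑ H : Matrix (Fin r) (Fin n) (ZMod 2),
            (if H.mulVec v = 0 ∧ H.mulVec w = 0 then (1:ℝ) else 0) := by
          rw [Finset.sum_comm]
          exact Finset.sum_congr rfl fun v _ => Finset.sum_comm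
      _ = ∑ v ∈ X, ∑ w ∈ X,
            ((Finset.univ.filter fun H : Matrix (Fin r) (Fin n) (ZMod 2) =>
              H.mulVec v = 0 ∧ H.mulVec w = 0).card : ℝ) := by
          exact Finset.sum_congr rfl fun v _ => Finset.sum_congr rfl fun w _ =>
            Finset.sum_boole _ _
      _ = (m : ℝ) * (T * p) + (m : ℝ) * ((m : ℝ) - 1) * (T * p ^ 2) := by
          have inner : ∀ v ∈ X, ∑ w ∈ X,
              ((Finset.univ.filter fun H : Matrix (Fin r) (Fin n) (ZMod 2) =>
                H.mulVec v = 0 ∧ H.mulVec w = 0).card : ℝ)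
              = T * p + ((m : ℝ) - 1) * (T * p ^ 2) := by
            intro v hv
            rw [← Finset.add_sum_erase _ _ hv]
            have hdiag : ((Finset.univ.filter fun H : Matrix (Fin r) (Fin n) (ZMod 2) =>
                H.mulVec v = 0 ∧ H.mulVec v = 0).card : ℝ) = T * p := by
              rw [← hcnt v hv]
              congr 1
              exact congrArg Finset.card (Finset.filter_congr fun H _ => by simp)
            rw [hdiag]
            congr 1
            have hconst : ∀ w ∈ X.erase v,
                ((Finset.univ.filter fun H : Matrix (Fin r) (Fin n) (ZMod 2) =>
                  H.mulVec v = 0 ∧ H.mulVec w = 0).card : ℝ) = T * p ^ 2 := by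
              intro w hw
              exact hcnt2 v hv w (Finset.mem_of_mem_erase hw)
                (fun h => (Finset.ne_of_mem_erase hw) h.symm)
            rw [Finset.sum_congr rfl hconst, Finset.sum_const, Finset.card_erase_of_mem hv,
              hm, nsmul_eq_mul]
            congr 1
            rw [Nat.cast_sub hm1, Nat.cast_one]
          rw [Finset.sum_congr rfl inner, Finset.sum_const, hm, nsmul_eq_mul]
          ring
  set A : Finset (Matrix (Fin r) (Fin n) (ZMod 2)) :=
    Finset.univ.filter (fun H => ∃ v ∈ X, H.mulVec v = 0) with hA
  set a : ℝ := (A.card : ℝ) with ha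
  have ha0 : 0 ≤ a := by positivity
  have hmemA : ∀ H, H ∈ A ↔ 0 < Nf H := by
    intro H
    rw [hA, Finset.mem_filter]
    simp only [Finset.mem_univ, true_and]
    rw [hNf]
    rw [Finset.card_pos, Finset.filter_nonempty_iff]
  have hA_T : a ≤ T := by
    rw [ha, hTdef]
    have := Finset.card_filter_le (Finset.univ : Finset (Matrix (Fin r) (Fin n) (ZMod 2)))
      (fun H => ∃ v ∈ X, H.mulVec v = 0)
    rw [Finset.card_univ] at this
    exact_mod_cast this
  -- sums over A equal sums over univ
  have hsumA1 : ∑ H ∈ A, (Nf H : ℝ) = ∑ H : Matrix (Fin r) (Fin n) (ZMod 2), (Nf H : ℝ) := by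
    apply Finset.sum_subset (Finset.subset_univ A)
    intro H _ hH
    have : ¬ 0 < Nf H := fun h => hH ((hmemA H).mpr h)
    simp [Nat.eq_zero_of_not_pos this]
  -- Bonferroni bound
  have hBon : (m : ℝ) * (T * p) - (m : ℝ) * ((m : ℝ) - 1) * (T * p ^ 2) / 2 ≤ a := by
    have hterm : ∀ H ∈ A, (Nf H : ℝ) - (Nf H : ℝ) * ((Nf H : ℝ) - 1) / 2 ≤ 1 := by
      intro H hH
      have h1 : 1 ≤ Nf H := (hmemA H).mp hH
      rcases Nat.lt_or_ge (Nf H) 2 with h | h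
      · have : Nf H = 1 := by omega
        rw [this]; norm_num
      · have h2 : (2 : ℝ) ≤ (Nf H : ℝ) := by exact_mod_cast h
        nlinarith
    have hsum : ∑ H : Matrix (Fin r) (Fin n) (ZMod 2),
        ((Nf H : ℝ) - (Nf H : ℝ) * ((Nf H : ℝ) - 1) / 2) ≤ a := by
      rw [← Finset.sum_subset (Finset.subset_univ A)
        (fun H _ hH => by
          have : ¬ 0 < Nf H := fun h => hH ((hmemA H).mpr h)
          simp [Nat.eq_zero_of_not_pos this])]
      calc ∑ H ∈ A, ((Nf H : ℝ) - (Nf H : ℝ) * ((Nf H : ℝ) - 1) / 2)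
          ≤ ∑ H ∈ A, (1 : ℝ) := Finset.sum_le_sum hterm
        _ = a := by rw [Finset.sum_const, nsmul_eq_mul, mul_one, ha]
    have hexpand : ∑ H : Matrix (Fin r) (Fin n) (ZMod 2),
        ((Nf H : ℝ) - (Nf H : ℝ) * ((Nf H : ℝ) - 1) / 2)
        = (3/2) * ((m : ℝ) * (T * p))
          - ((m : ℝ) * (T * p) + (m : ℝ) * ((m : ℝ) - 1) * (T * p ^ 2)) / 2 := by
      rw [← hS2, ← hS1, Finset.mul_sum, Finset.sum_div, ← Finset.sum_sub_distrib]
      exact Finset.sum_congr rfl fun H _ => by ring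
    rw [hexpand] at hsum
    linarith
  -- Cauchy-Schwarz bound
  have hCS : ((m : ℝ) * (T * p)) ^ 2
      ≤ a * ((m : ℝ) * (T * p) + (m : ℝ) * ((m : ℝ) - 1) * (T * p ^ 2)) := by
    have h0 := Finset.sum_mul_sq_le_sq_mul_sq A (fun _ => (1:ℝ)) (fun H => (Nf H : ℝ))
    simp only [one_mul, one_pow] at h0
    rw [Finset.sum_const, nsmul_eq_mul, mul_one] at h0
    have h1 : ∑ H ∈ A, (Nf H : ℝ) ^ 2
        ≤ ∑ H : Matrix (Fin r) (Fin n) (ZMod 2), (Nf H : ℝ) ^ 2 :=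
      Finset.sum_le_sum_of_subset_of_nonneg (Finset.subset_univ A)
        (fun _ _ _ => by positivity)
    rw [hsumA1, hS1] at h0
    rw [hS2] at h1
    calc ((m : ℝ) * (T * p)) ^ 2 ≤ (A.card : ℝ) * ∑ H ∈ A, (Nf H : ℝ) ^ 2 := h0
      _ ≤ a * ((m : ℝ) * (T * p) + (m : ℝ) * ((m : ℝ) - 1) * (T * p ^ 2)) := by
          rw [← ha]
          exact mul_le_mul_of_nonneg_left h1 ha0
  -- conclude
  clear_value T p Nf A a
  clear hcnt hcnt2 hS1 hS2 hsumA1 hmemA hNf hA ha hTdef hpdef hp hXne hX hm X Nf A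
  rw [hf, ge_iff_le]
  apply max_le
  · rw [le_div_iff₀ hT0, hx]
    nlinarith [hBon, mul_nonneg (mul_nonneg (Nat.cast_nonneg m : (0:ℝ) ≤ m) hT0.le)
      (mul_nonneg hp0.le hp0.le)]
  · rw [le_div_iff₀ hT0]
    have h6 : (T * x) ^ 2 ≤ a * (T * x + T * x ^ 2) := by
      rw [hx]
      nlinarith [hCS, mul_nonneg (mul_nonneg ha0 hT0.le)
        (mul_nonneg (mul_nonneg (Nat.cast_nonneg m : (0:ℝ) ≤ m) hp0.le) hp0.le)]
    have hTx : 0 < T * x := mul_pos hT0 hx0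
    have h7 : T * x ≤ a * (1 + x) := by
      have h6' : (T * x) * (T * x) ≤ (a * (1 + x)) * (T * x) := by
        calc (T * x) * (T * x) = (T * x) ^ 2 := by ring
          _ ≤ a * (T * x + T * x ^ 2) := h6
          _ = (a * (1 + x)) * (T * x) := by ring
      exact le_of_mul_le_mul_right h6' hTx
    have h7' : T * x ≤ a + a * x := by rw [mul_add, mul_one] at h7; exact h7
    have h9 : (x - 1) * T ≤ a * x := by linarith
    have hxinv : x * x⁻¹ = 1 := mul_inv_cancel₀ hx0.ne'
    have e1 : (x - 1) * T * x⁻¹ = T - T * x⁻¹ := by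
      calc (x - 1) * T * x⁻¹ = T * (x * x⁻¹) - T * x⁻¹ := by ring
        _ = T - T * x⁻¹ := by rw [hxinv, mul_one]
    have e2 : a * x * x⁻¹ = a := by rw [mul_assoc, hxinv, mul_one]
    have h10 := mul_le_mul_of_nonneg_right h9 (inv_nonneg.mpr hx0.le)
    rw [e1, e2] at h10
    rw [one_div]
    linarith
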